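/- arXiv:1305.3658 — 3 statements merged into one kernel-verified Lean document; each statement's English description precedes it below -/
import Mathlib

section
/- Let F be the category of finite sets and partial maps, and call a functor G : F^n → F an n-fold smash product if G(⟨1⟩,…,⟨1⟩) = ⟨1⟩ and G preserves coproducts in each variable separately (where the coproduct of ⟨m⟩ and ⟨k⟩ in F is ⟨m+k⟩). Then between any two n-fold smash products there exists exactly one natural isomorphism; in particular, the groupoid of n-fold smash products and natural isomorphisms is contractible (equivalent to the terminal groupoid). -/
open CategoryTheory

/-- Objects of Segal's category `F`: the natural number `n` stands for the
finite set `⟨n⟩ = {1,…,n}` (with `⟨0⟩ = ∅`). -/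
abbrev FCat : Type := ℕ

/-- A partial map `⟨m⟩ → ⟨n⟩` is encoded as a function `Fin m → Option (Fin n)`
(`none` on the complement of the domain of definition). -/
instance : CategoryStruct FCat where
  Hom m n := Fin m → Option (Fin n)
  id _ := fun i => some i
  comp f g := fun i => (f i).bind g

/-- The category `F` of finite sets `⟨n⟩` and partial maps; composition of
partial maps is composition on the largest domain where it is defined. -/
instance : Category FCat where
  id_comp _ := rfl
  comp_id f := by
    funext i
    show (f i).bind (fun j => some j) = f i
    cases f i <;> rfl
  assoc f g h := by
    funext i
    show ((f i).bind g).bind h = (f i).bind (fun j => (g j).bind h)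
    cases f i <;> rfl

/-- The underlying `Option`-valued function of a morphism of `F`. -/
def FCat.app {m n : FCat} (f : m ⟶ n) : Fin m → Option (Fin n) := f

/-- A morphism of `F` is inert if the preimage of each element of the codomain
consists of exactly one element. -/
def FCat.Inert {m n : FCat} (f : m ⟶ n) : Prop :=
  ∀ j : Fin n, ∃! i : Fin m, FCat.app f i = some j

/-- A morphism of `F` is active if its domain of definition is the whole source. -/
def FCat.Active {m n : FCat} (f : m ⟶ n) : Prop :=
  ∀ i : Fin m, FCat.app f i ≠ none

open Limits

/-- The functor `F → F^k` inserting an object into the `i`-th coordinate, the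
other coordinates being fixed at `x`. -/
def insFunctor (k : ℕ) (x : Fin k → FCat) (i : Fin k) :
    FCat ⥤ (∀ _ : Fin k, FCat) where
  obj a := fun j => if j = i then a else x j
  map {a b} f := fun j =>
    if h : j = i then
      eqToHom (if_pos h) ≫ f ≫ eqToHom (if_pos h).symm
    else
      eqToHom ((if_neg h).trans (if_neg h).symm)
  map_id a := by
    funext j
    by_cases h : j = i
    · subst h; simp
    · simp [h]
  map_comp {a b c} f g := by
    funext j
    by_cases h : j = i
    · subst h; simp
    · simp [h]

/-- A functor `G : F^k → F` is a `k`-fold smash product if `G(⟨1⟩,…,⟨1⟩) = ⟨1⟩`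
and `G` preserves (finite) coproducts in each variable separately. -/
def IsSmash (k : ℕ) (G : (∀ _ : Fin k, FCat) ⥤ FCat) : Prop :=
  G.obj (fun _ => (1 : FCat)) = (1 : FCat) ∧
    ∀ (x : Fin k → FCat) (i : Fin k),
      PreservesFiniteCoproducts (insFunctor k x i ⋙ G)

namespace Smash6

open CategoryTheory Limits

variable {k : ℕ}

abbrev onesk (k : ℕ) : Fin k → FCat := fun _ => 1

@[simp] lemma fcomp_eval {m n p : FCat} (f : m ⟶ n) (g : n ⟶ p) (q : Fin m) :
    FCat.app (f ≫ g) q = (FCat.app f q).bind (FCat.app g) := rfl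

@[simp] lemma fid_eval {m : FCat} (q : Fin m) : FCat.app (𝟙 m) q = some q := rfl

lemma eqToHom_eval {m n : FCat} (h : m = n) (q : Fin m) :
    FCat.app (eqToHom h) q = some (Fin.cast h q) := by subst h; rfl

lemma eqToHom_eval' {m n : FCat} (h : m = n) (q : Fin m) :
    (eqToHom h : m ⟶ n) q = some (Fin.cast h q) := by subst h; rfl

lemma fcomp_eval' {m n p : FCat} (f : m ⟶ n) (g : n ⟶ p) (q : Fin m) :
    (f ≫ g) q = (f q).bind g := rfl

/-- the canonical map `⟨1⟩ ⟶ ⟨x i⟩` hitting `j i`, bundled over all coordinates -/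
def δ (x : Fin k → FCat) (j : ∀ i, Fin (x i)) : onesk k ⟶ x :=
  fun i => (fun _ => some (j i) : (1 : FCat) ⟶ x i)

@[simp] lemma δ_eval (x : Fin k → FCat) (j : ∀ i, Fin (x i)) (i : Fin k) (p : Fin 1) :
    FCat.app (δ x j i) p = some (j i) := rfl

/-- the standard cofan exhibiting `⟨n⟩` as the coproduct of `n` copies of `⟨1⟩` -/
def stdCofan (n : ℕ) : Cofan (fun _ : Fin n => (1 : FCat)) :=
  Cofan.mk (n : FCat) (fun j => (fun _ => some j : (1 : FCat) ⟶ (n : FCat)))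

def stdIsColimit (n : ℕ) : IsColimit (stdCofan n) :=
  mkCofanColimit _ (fun t => fun q => FCat.app (t.inj q) 0)
    (fun t j => by
      funext p
      show (some j).bind (fun q => FCat.app (t.inj q) 0) = FCat.app (t.inj j) p
      have : p = 0 := Subsingleton.elim _ _
      rw [this]; rfl)
    (fun t m hm => by
      funext q
      have h := congrFun (hm q) 0
      change (some q).bind m = FCat.app (t.inj q) 0 at h
      exact h)

section ColimitStructure

variable {J : Type} {D : Discrete J ⥤ FCat} {c : Cocone D}

/-- cocone on `D` from a bare family of maps -/
def famCocone (m : FCat) (g : ∀ j : J, D.obj ⟨j⟩ ⟶ m) : Cocone D where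
  pt := m
  ι := Discrete.natTrans (fun i => g i.as)

/-- the `j`-th structure map of a cocone, with its codomain stated as `c.pt` -/
def legOf (c : Cocone D) (j : J) : ((D.obj ⟨j⟩ : FCat) ⟶ (c.pt : FCat)) := c.ι.app ⟨j⟩

lemma desc_fam (hc : IsColimit c) (m : FCat) (g : ∀ j : J, D.obj ⟨j⟩ ⟶ m) :
    ∃ h : c.pt ⟶ m, ∀ (j : J) (p : Fin (D.obj ⟨j⟩)),
      (FCat.app (legOf c j) p).bind (FCat.app h) = FCat.app (g j) p :=
  ⟨hc.desc (famCocone m g), fun j p => congrFun (hc.fac (famCocone m g) ⟨j⟩) p⟩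

lemma leg_total (hc : IsColimit c) (j : J) (p : Fin (D.obj ⟨j⟩)) :
    ∃ q, FCat.app (legOf c j) p = some q := by
  rcases hq : FCat.app (legOf c j) p with _ | q
  · exfalso
    obtain ⟨h, hfac⟩ := desc_fam hc (1 : FCat)
      (fun a => (fun _ => some 0 : (D.obj ⟨a⟩ : FCat) ⟶ (1 : FCat)))
    have := hfac j p
    rw [hq] at this
    exact absurd this (by simp [FCat.app])
  · exact ⟨q, rfl⟩

lemma leg_inj (hc : IsColimit c) {j j' : J} {p : Fin (D.obj ⟨j⟩)} {p' : Fin (D.obj ⟨j'⟩)}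
    {q : Fin c.pt} (h1 : FCat.app (legOf c j) p = some q)
    (h2 : FCat.app (legOf c j') p' = some q) :
    (⟨j, p⟩ : Σ a : J, Fin (D.obj ⟨a⟩)) = ⟨j', p'⟩ := by
  by_contra hne
  classical
  obtain ⟨h, hfac⟩ := desc_fam hc (1 : FCat)
    (fun a => (fun r => if (⟨a, r⟩ : Σ a : J, Fin (D.obj ⟨a⟩)) = ⟨j, p⟩ then some 0 else none :
      (D.obj ⟨a⟩ : FCat) ⟶ (1 : FCat)))
  have hA := hfac j p
  have hB := hfac j' p'
  rw [h1] at hA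
  rw [h2] at hB
  change FCat.app h q = _ at hA hB
  rw [hA] at hB
  have hne' : (⟨j', p'⟩ : Σ a : J, Fin (D.obj ⟨a⟩)) ≠ ⟨j, p⟩ := fun hh => hne hh.symm
  have hcc : ¬(j' = j ∧ HEq p' p) := by
    intro hh
    exact hne' (Sigma.ext hh.1 hh.2)
  simp [FCat.app, hcc] at hB

lemma leg_surj (hc : IsColimit c) (q : Fin c.pt) :
    ∃ (j : J) (p : Fin (D.obj ⟨j⟩)), FCat.app (legOf c j) p = some q := by
  by_contra h
  push_neg at h
  classical
  have h1 : 𝟙 c.pt = hc.desc c := hc.uniq c (𝟙 c.pt) (fun jd => Category.comp_id _)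
  have h2' : (fun r => if r = q then none else some r : c.pt ⟶ c.pt) = hc.desc c := by
    refine hc.uniq c _ (fun jd => ?_)
    obtain ⟨j⟩ := jd
    funext p
    show (FCat.app (legOf c j) p).bind (fun r => if r = q then none else some r)
        = FCat.app (legOf c j) p
    rcases hv : FCat.app (legOf c j) p with _ | r
    · rfl
    · have hrq : r ≠ q := by
        intro hr
        exact h j p (hr ▸ hv)
      show (if r = q then none else some r) = some r
      rw [if_neg hrq]
  have hqq : (𝟙 c.pt : c.pt ⟶ c.pt) q = (fun r => if r = q then none else some r : c.pt ⟶ c.pt) q := by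
    rw [h1, h2']
  simp at hqq

end ColimitStructure

/-- the key structure: `G.obj x` is in canonical bijection with `∏ᵢ ⟨x i⟩`,
via the maps `G.map (δ x j)`. -/
def Good (G : (∀ _ : Fin k, FCat) ⥤ FCat) (x : Fin k → FCat) : Prop :=
  ∃ s : (∀ i, Fin (x i)) → Fin (G.obj x),
    Function.Bijective s ∧
    ∀ (j : ∀ i, Fin (x i)) (p : Fin (G.obj (onesk k))),
      FCat.app (G.map (δ x j)) p = some (s j)

lemma good_ones {G : (∀ _ : Fin k, FCat) ⥤ FCat} (hG : IsSmash k G) : Good G (onesk k) := by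
  have h1 : G.obj (onesk k) = 1 := hG.1
  have hsub : Subsingleton (Fin (G.obj (onesk k))) := by rw [h1]; infer_instance
  refine ⟨fun _ => Fin.cast h1.symm 0,
    ⟨fun a b _ => funext fun i => Subsingleton.elim _ _,
     fun q => ⟨fun i => 0, Subsingleton.elim _ _⟩⟩, ?_⟩
  intro j p
  have hδ : δ (onesk k) j = 𝟙 (onesk k) := by
    funext i p'
    show (some (j i) : Option (Fin 1)) = some p'
    exact congrArg some (Subsingleton.elim _ _)
  rw [hδ, G.map_id]
  show some p = some (Fin.cast h1.symm 0)
  exact congrArg some (Subsingleton.elim _ _)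

lemma good_step {G : (∀ _ : Fin k, FCat) ⥤ FCat} (hG : IsSmash k G)
    (x : Fin k → FCat) (i : Fin k) (n : ℕ)
    (ih : Good G (fun c => if c = i then 1 else x c)) :
    Good G (fun c => if c = i then n else x c) := by
  classical
  obtain ⟨s₁, hs₁bij, hs₁⟩ := ih
  haveI := hG.2 x i
  let H : FCat ⥤ FCat := insFunctor k x i ⋙ G
  let cc := H.mapCocone (stdCofan n)
  have hcol : IsColimit cc := isColimitOfPreserves H (stdIsColimit n)
  let mIdx : (∀ c, Fin (if c = i then n else x c)) → Fin n :=
    fun j => Fin.cast (if_pos rfl) (j i)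
  let res : (∀ c, Fin (if c = i then n else x c)) → (∀ c, Fin (if c = i then 1 else x c)) :=
    fun j c => if h : c = i then Fin.cast (if_pos h).symm 0
      else Fin.cast ((if_neg h).trans (if_neg h).symm) (j c)
  have htot : ∀ (m : Fin n) (p : Fin (G.obj (fun c => if c = i then 1 else x c))),
      ∃ q, FCat.app (legOf cc m) p = some q := fun m p => leg_total hcol m p
  choose T hT using htot
  have hdec : ∀ j : (∀ c, Fin (if c = i then n else x c)),
      G.map (δ _ j) = G.map (δ _ (res j)) ≫ legOf cc (mIdx j) := by
    intro j
    have hδ : δ (fun c => if c = i then n else x c) j =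
        δ (fun c => if c = i then 1 else x c) (res j) ≫
          (insFunctor k x i).map ((fun _ => some (mIdx j) : (1 : FCat) ⟶ (n : FCat))) := by
      funext c
      by_cases h : c = i
      · subst h
        funext p
        show (some (j c) : Option (Fin _)) =
          (some (res j c)).bind (FCat.app ((insFunctor k x c).map
            ((fun _ => some (mIdx j) : (1 : FCat) ⟶ (n : FCat))) c))
        simp only [insFunctor, dite_true, fcomp_eval, eqToHom_eval, eqToHom_eval',
          Option.bind_some, FCat.app, Option.bind_eq_bind]
        simp only [fcomp_eval', eqToHom_eval', Option.bind_some]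
        exact congrArg some (Fin.ext (by simp [mIdx]))
      · funext p
        show (some (j c) : Option (Fin _)) =
          (some (res j c)).bind (FCat.app ((insFunctor k x i).map
            ((fun _ => some (mIdx j) : (1 : FCat) ⟶ (n : FCat))) c))
        simp only [insFunctor, dif_neg h, Option.bind_some, eqToHom_eval, eqToHom_eval',
          FCat.app]
        refine congrArg some (Fin.ext ?_)
        simp [res, dif_neg h]
    rw [hδ]
    exact G.map_comp _ _
  refine ⟨fun j => T (mIdx j) (s₁ (res j)), ⟨?_, ?_⟩, ?_⟩
  · -- injective
    intro a b hab
    replace hab : T (mIdx a) (s₁ (res a)) = T (mIdx b) (s₁ (res b)) := hab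
    have h1 := hT (mIdx a) (s₁ (res a))
    have h2 := hT (mIdx b) (s₁ (res b))
    rw [hab] at h1
    have hsig := leg_inj hcol h1 h2
    obtain ⟨hm, hp⟩ := Sigma.mk.inj_iff.mp hsig
    have hp' : s₁ (res a) = s₁ (res b) := eq_of_heq hp
    have hres : res a = res b := hs₁bij.1 hp'
    funext c
    by_cases h : c = i
    · subst h
      apply Fin.ext
      have := congrArg Fin.val hm
      simpa [mIdx] using this
    · have := congrFun hres c
      apply Fin.ext
      have hv := congrArg Fin.val this
      simpa [res, dif_neg h] using hv
  · -- surjective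
    intro q
    obtain ⟨m, p, hmp⟩ := leg_surj hcol q
    obtain ⟨j₀, hj₀⟩ := hs₁bij.2 p
    let jj : ∀ c, Fin (if c = i then n else x c) :=
      fun c => if h : c = i then Fin.cast (if_pos h).symm m
        else Fin.cast ((if_neg h).trans (if_neg h).symm) (j₀ c)
    refine ⟨jj, ?_⟩
    have hm2 : mIdx jj = m := by
      apply Fin.ext
      simp [mIdx, jj]
    have hr2 : res jj = j₀ := by
      funext c
      by_cases h : c = i
      · subst h
        apply Fin.ext
        have hlt : (j₀ c).val < 1 := by
          have := (j₀ c).isLt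
          simpa [if_pos rfl] using this
        simp [res, jj, Nat.lt_one_iff.mp hlt]
      · apply Fin.ext
        simp [res, jj, dif_neg h]
    show T (mIdx jj) (s₁ (res jj)) = q
    rw [hr2, hm2, hj₀]
    have := hT m p
    rw [hmp] at this
    exact (Option.some_inj.mp this).symm
  · -- the defining property
    intro j p
    rw [hdec j]
    show (FCat.app (G.map (δ _ (res j))) p).bind (FCat.app (legOf cc (mIdx j))) = _
    rw [hs₁ (res j) p]
    show FCat.app (legOf cc (mIdx j)) (s₁ (res j)) = some (T (mIdx j) (s₁ (res j)))
    exact hT (mIdx j) (s₁ (res j))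

lemma all_good {G : (∀ _ : Fin k, FCat) ⥤ FCat} (hG : IsSmash k G) (x : Fin k → FCat) :
    Good G x := by
  have aux : ∀ (m : ℕ) (y : Fin k → FCat), (∀ i : Fin k, m ≤ i.val → y i = 1) → Good G y := by
    intro m
    induction m with
    | zero =>
      intro y hy
      have : y = onesk k := funext fun i => hy i (Nat.zero_le _)
      rw [this]
      exact good_ones hG
    | succ m ih =>
      intro y hy
      by_cases hm : m < k
      · let i₀ : Fin k := ⟨m, hm⟩
        have h1 : Good G (fun c => if c = i₀ then 1 else y c) := by
          apply ih
          intro i hi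
          by_cases h : i = i₀
          · rw [if_pos h]
          · rw [if_neg h]
            apply hy
            have hne : i.val ≠ m := fun hh => h (Fin.ext hh)
            omega
        have h2 := good_step hG y i₀ (y i₀) h1
        have heq : (fun c => if c = i₀ then y i₀ else y c) = y := by
          funext c
          by_cases h : c = i₀
          · rw [if_pos h, h]
          · rw [if_neg h]
        rwa [heq] at h2
      · apply ih
        intro i hi
        apply hy
        have := i.isLt
        omega
  exact aux k x (fun i hi => absurd i.isLt (by omega))

lemma map_none {G : (∀ _ : Fin k, FCat) ⥤ FCat} (hG : IsSmash k G) {y : Fin k → FCat}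
    (g : onesk k ⟶ y) (i₀ : Fin k) (hg : FCat.app (g i₀) 0 = none)
    (p : Fin (G.obj (onesk k))) :
    FCat.app (G.map g) p = none := by
  classical
  let y' : Fin k → FCat := fun c => if c = i₀ then 0 else y c
  have hempty : ∀ q : Fin (G.obj y'), False := by
    obtain ⟨s, hbij, _⟩ := all_good hG y'
    intro q
    obtain ⟨j, hj⟩ := hbij.2 q
    have hlt := (j i₀).isLt
    simp only [y', if_pos rfl] at hlt
    omega
  let a : onesk k ⟶ y' := fun c =>
    if h : c = i₀ then (fun _ => none : (1 : FCat) ⟶ y' c)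
    else (fun p' => (FCat.app (g c) p').map
      (Fin.cast (show y c = y' c by simp [y', h])) : (1 : FCat) ⟶ y' c)
  let b : y' ⟶ y := fun c =>
    if h : c = i₀ then (fun q => ((Fin.cast (show y' c = 0 by simp [y', h]) q).elim0) : y' c ⟶ y c)
    else (fun q => some (Fin.cast (show y' c = y c by simp [y', h]) q) : y' c ⟶ y c)
  have hfac : g = a ≫ b := by
    funext c p'
    show FCat.app (g c) p' = (FCat.app (a c) p').bind (b c)
    by_cases h : c = i₀
    · subst h
      have hp' : p' = (0 : Fin 1) := Subsingleton.elim _ _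
      rw [hp', hg]
      simp [a, FCat.app]
    · rcases hv : FCat.app (g c) p' with _ | r <;> simp only [FCat.app] at hv ⊢
      · simp [a, dif_neg h, FCat.app, hv]
      · simp only [a, b, dif_neg h, FCat.app, hv, Option.map_some, Option.bind_some]
        exact congrArg some (Fin.ext (by simp))
  rw [hfac, G.map_comp, fcomp_eval]
  rcases hv : FCat.app (G.map a) p with _ | q
  · rfl
  · exact (hempty q).elim

lemma total_or {y : Fin k → FCat} (g : onesk k ⟶ y) :
    (∃ j : ∀ i, Fin (y i), g = δ y j) ∨ (∃ i₀ : Fin k, FCat.app (g i₀) 0 = none) := by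
  classical
  by_cases h : ∀ i, ∃ r, FCat.app (g i) 0 = some r
  · choose j hj using h
    left
    refine ⟨j, ?_⟩
    funext i p
    show FCat.app (g i) p = some (j i)
    rw [Subsingleton.elim p (0 : Fin 1)]
    exact hj i
  · right
    push_neg at h
    obtain ⟨i₀, hi₀⟩ := h
    refine ⟨i₀, ?_⟩
    rcases hv : FCat.app (g i₀) 0 with _ | r
    · rfl
    · exact absurd hv (hi₀ r)

end Smash6

open Smash6

/-- Between any two `k`-fold smash products there is exactly one natural
isomorphism; the groupoid of `k`-fold smash products is contractible. -/
theorem statement6 (k : ℕ) (G G' : (∀ _ : Fin k, FCat) ⥤ FCat)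
    (hG : IsSmash k G) (hG' : IsSmash k G') :
    ∃! _α : G ≅ G', True := by
  classical
  choose sG hsG using fun x => all_good hG x
  choose sG' hsG' using fun x => all_good hG' x
  let eG : ∀ x, (∀ i, Fin (x i)) ≃ Fin (G.obj x) :=
    fun x => Equiv.ofBijective (sG x) (hsG x).1
  let eG' : ∀ x, (∀ i, Fin (x i)) ≃ Fin (G'.obj x) :=
    fun x => Equiv.ofBijective (sG' x) (hsG' x).1
  let β : ∀ x, ((G.obj x : FCat) ⟶ (G'.obj x : FCat)) :=
    fun x q => some (sG' x ((eG x).symm q))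
  let βinv : ∀ x, ((G'.obj x : FCat) ⟶ (G.obj x : FCat)) :=
    fun x q => some (sG x ((eG' x).symm q))
  have hβ : ∀ x (j : ∀ i, Fin (x i)), FCat.app (β x) (sG x j) = some (sG' x j) := by
    intro x j
    show some (sG' x ((eG x).symm (sG x j))) = some (sG' x j)
    exact congrArg (fun t => some (sG' x t)) ((eG x).symm_apply_apply j)
  have hβinv : ∀ x (j : ∀ i, Fin (x i)), FCat.app (βinv x) (sG' x j) = some (sG x j) := by
    intro x j
    show some (sG x ((eG' x).symm (sG' x j))) = some (sG x j)
    exact congrArg (fun t => some (sG x t)) ((eG' x).symm_apply_apply j)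
  have hsurjG : ∀ x (q : Fin (G.obj x)), ∃ j, sG x j = q := fun x q => (hsG x).1.2 q
  -- the canonical components are isomorphisms
  have hvi : ∀ x, β x ≫ βinv x = 𝟙 (G.obj x) := by
    intro x
    funext q
    obtain ⟨j, hj⟩ := hsurjG x q
    subst hj
    show (FCat.app (β x) (sG x j)).bind (FCat.app (βinv x)) = some (sG x j)
    rw [hβ x j]
    exact hβinv x j
  have hiv : ∀ x, βinv x ≫ β x = 𝟙 (G'.obj x) := by
    intro x
    funext q
    obtain ⟨j, hj⟩ := (hsG' x).1.2 q
    subst hj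
    show (FCat.app (βinv x) (sG' x j)).bind (FCat.app (β x)) = some (sG' x j)
    rw [hβinv x j]
    exact hβ x j
  -- evaluation points
  let p₀ : Fin (G.obj (onesk k)) := Fin.cast hG.1.symm 0
  let p₀' : Fin (G'.obj (onesk k)) := Fin.cast hG'.1.symm 0
  -- action of G.map f on the canonical elements
  have hact : ∀ {y z : Fin k → FCat} (f : y ⟶ z) (j : ∀ i, Fin (y i)),
      (∃ j₂ : ∀ i, Fin (z i),
        FCat.app (G.map f) (sG y j) = some (sG z j₂) ∧
        FCat.app (G'.map f) (sG' y j) = some (sG' z j₂)) ∨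
      (FCat.app (G.map f) (sG y j) = none ∧ FCat.app (G'.map f) (sG' y j) = none) := by
    intro y z f j
    have hGf : FCat.app (G.map (δ y j ≫ f)) p₀ = FCat.app (G.map f) (sG y j) := by
      rw [G.map_comp, fcomp_eval, (hsG y).2 j p₀]
      rfl
    have hG'f : FCat.app (G'.map (δ y j ≫ f)) p₀' = FCat.app (G'.map f) (sG' y j) := by
      rw [G'.map_comp, fcomp_eval, (hsG' y).2 j p₀']
      rfl
    rcases total_or (δ y j ≫ f) with ⟨j₂, hj₂⟩ | ⟨i₀, hi₀⟩
    · left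
      refine ⟨j₂, ?_, ?_⟩
      · rw [← hGf, hj₂]
        exact (hsG z).2 j₂ p₀
      · rw [← hG'f, hj₂]
        exact (hsG' z).2 j₂ p₀'
    · right
      constructor
      · rw [← hGf]
        exact map_none hG _ i₀ hi₀ p₀
      · rw [← hG'f]
        exact map_none hG' _ i₀ hi₀ p₀'
  -- naturality of β
  have hnatβ : ∀ {y z : Fin k → FCat} (f : y ⟶ z), G.map f ≫ β z = β y ≫ G'.map f := by
    intro y z f
    funext q
    obtain ⟨j, hj⟩ := hsurjG y q
    subst hj
    show (FCat.app (G.map f) (sG y j)).bind (FCat.app (β z))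
      = (FCat.app (β y) (sG y j)).bind (FCat.app (G'.map f))
    rw [hβ y j]
    rcases hact f j with ⟨j₂, h1, h2⟩ | ⟨h1, h2⟩
    · rw [h1, Option.bind_some, Option.bind_some, h2]
      exact hβ z j₂
    · rw [h1, Option.bind_some, h2]
      rfl
  let βIso : G ≅ G' := NatIso.ofComponents
    (fun x => ⟨β x, βinv x, hvi x, hiv x⟩) (fun f => hnatβ f)
  -- uniqueness: any natural isomorphism has the canonical components
  have huniq : ∀ (α : G ≅ G') (x : Fin k → FCat), α.hom.app x = β x := by
    intro α x
    -- the component at the unit is everywhere defined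
    have hone : ∀ p : Fin (G.obj (onesk k)),
        ∃ q, FCat.app (α.hom.app (onesk k)) p = some q := by
      intro p
      have h := congrFun (congrArg NatTrans.app α.hom_inv_id) (onesk k)
      have h2 := congrFun h p
      change (FCat.app (α.hom.app (onesk k)) p).bind (FCat.app (α.inv.app (onesk k)))
        = some p at h2
      rcases hv : FCat.app (α.hom.app (onesk k)) p with _ | q
      · rw [hv] at h2
        exact absurd h2 (by simp)
      · exact ⟨q, rfl⟩
    funext q
    obtain ⟨j, hj⟩ := hsurjG x q
    subst hj
    have hnat := congrFun (α.hom.naturality (δ x j)) p₀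
    change (FCat.app (G.map (δ x j)) p₀).bind (FCat.app (α.hom.app x))
      = (FCat.app (α.hom.app (onesk k)) p₀).bind (FCat.app (G'.map (δ x j))) at hnat
    rw [(hsG x).2 j p₀] at hnat
    obtain ⟨q₁, hq₁⟩ := hone p₀
    rw [hq₁] at hnat
    change FCat.app (α.hom.app x) (sG x j)
      = FCat.app (G'.map (δ x j)) q₁ at hnat
    rw [(hsG' x).2 j q₁] at hnat
    show FCat.app (α.hom.app x) (sG x j) = FCat.app (β x) (sG x j)
    rw [hnat, hβ x j]
  refine ⟨βIso, trivial, ?_⟩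
  intro α _
  apply Iso.ext
  apply NatTrans.ext
  funext x
  rw [huniq α x]
  exact (huniq βIso x).symm
end

section
/- For n ≥ 2 and any nonempty subset A ⊆ {1, …, n−1}, let Λ^A[n] ⊆ Δ^n denote the union of all the codimension-one faces ∂_j Δ^n with j ∉ A (the generalized inner horn). Then the inclusion Λ^A[n] → Δ^n is inner anodyne. In particular, for n ≥ 2 the inclusion ∂_0Δ^n ∪ ∂_nΔ^n → Δ^n of the union of the two outer faces is inner anodyne. -/
open CategoryTheory Limits Simplicial SSet

/-- `f` is a retract of `g` in the arrow category. -/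
def IsRetractOf {X Y X' Y' : SSet} (f : X ⟶ Y) (g : X' ⟶ Y') : Prop :=
  ∃ (s : X ⟶ X') (r : X' ⟶ X) (s' : Y ⟶ Y') (r' : Y' ⟶ Y),
    s ≫ r = 𝟙 X ∧ s' ≫ r' = 𝟙 Y ∧ s ≫ g = f ≫ s' ∧ g ≫ r' = r ≫ f

/-- Stability of a class of maps of simplicial sets under pushout. -/
def StableUnderPushout (W : MorphismProperty SSet) : Prop :=
  ∀ ⦃A B A' B' : SSet⦄ (f : A ⟶ B) (g : A ⟶ A') (f' : A' ⟶ B') (g' : B ⟶ B'),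
    IsPushout g f f' g' → W f → W f'

/-- Stability of a class of maps of simplicial sets under retracts. -/
def StableUnderRetract (W : MorphismProperty SSet) : Prop :=
  ∀ ⦃X Y X' Y' : SSet⦄ (f : X ⟶ Y) (g : X' ⟶ Y'), IsRetractOf f g → W g → W f

/-- The inclusion functor of the initial segment `{i | i < j}` of a preorder. -/
def iioInclusion {J : Type} [Preorder J] (j : J) : Set.Iio j ⥤ J :=
  Monotone.functor (f := (Subtype.val : Set.Iio j → J)) fun _ _ h => h

/-- The cocone on the restriction of `F : J ⥤ SSet` to `{i | i < j}` with
apex `F.obj j`. -/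
def restrictedCocone {J : Type} [Preorder J] (F : J ⥤ SSet) (j : J) :
    Cocone (iioInclusion j ⋙ F) where
  pt := F.obj j
  ι :=
    { app := fun i => F.map (homOfLE i.2.le)
      naturality := by
        intro a b g
        dsimp
        rw [Category.comp_id, ← F.map_comp]
        exact congrArg F.map (Subsingleton.elim _ _) }

/-- Stability of a class of maps of simplicial sets under transfinite
composition: for every well-ordered chain `F : J ⥤ SSet` which is continuous
at limit stages and all of whose successor maps lie in `W`, the transfinite
composite `F(⊥) ⟶ colim F` lies in `W`. -/
def StableUnderTransfiniteComposition (W : MorphismProperty SSet) : Prop :=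
  ∀ (J : Type) [LinearOrder J] [SuccOrder J] [OrderBot J] [WellFoundedLT J]
    (F : J ⥤ SSet) (c : Cocone F), IsColimit c →
    (∀ j : J, ¬IsMax j → W (F.map (homOfLE (Order.le_succ j)))) →
    (∀ j : J, Order.IsSuccLimit j → Nonempty (IsColimit (restrictedCocone F j))) →
    W (c.ι.app ⊥)

/-- A weakly saturated class of maps of simplicial sets: one closed under
pushouts, retracts and transfinite composition. -/
def WeaklySaturated (W : MorphismProperty SSet) : Prop :=
  StableUnderPushout W ∧ StableUnderRetract W ∧ StableUnderTransfiniteComposition W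

/-- A class of maps of simplicial sets containing all inner horn inclusions
`Λ^n_k → Δ^n`, `0 < k < n`. -/
def ContainsInnerHorns (W : MorphismProperty SSet) : Prop :=
  ∀ (n : ℕ) (i : Fin (n + 1)), 0 < (i : ℕ) → (i : ℕ) < n → W (horn n i).ι

/-- A map of simplicial sets is inner anodyne if it lies in the saturation of
the inner horn inclusions, i.e. in every weakly saturated class containing
them. -/
def InnerAnodyne {X Y : SSet} (f : X ⟶ Y) : Prop :=
  ∀ W : MorphismProperty SSet, WeaklySaturated W → ContainsInnerHorns W → W f

/-- The generalized inner horn `Λ^A[n] ⊆ Δ^n`: the union of all the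
codimension-one faces `∂_j Δ^n` with `j ∉ A`.  A simplex of `Δ[n]` belongs to
it iff its vertices omit some `j ∉ A`. -/
def genHorn (n : ℕ) (A : Set (Fin (n + 1))) : SSet where
  obj m :=
    {α : Δ[n].obj m //
      ∃ j : Fin (n + 1), j ∉ A ∧ j ∉ Set.range (stdSimplex.asOrderHom α)}
  map {m₁ m₂} f := TypeCat.ofHom fun α =>
    ⟨Δ[n].map f α.1, by
      obtain ⟨j, hj, hj'⟩ := α.2
      exact ⟨j, hj, fun hmem => hj' (Set.range_comp_subset_range _ _ hmem)⟩⟩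

/-- The inclusion `Λ^A[n] → Δ^n`. -/
def genHornInclusion (n : ℕ) (A : Set (Fin (n + 1))) : genHorn n A ⟶ Δ[n] where
  app _ := TypeCat.ofHom fun α => α.1

/-! ### Auxiliary material for the proof -/

section Auxiliary

open SimplexCategory

/-- Weakly saturated classes are stable under (binary) composition, using
transfinite composition along the chain `Fin 3`. -/
lemma WeaklySaturated.comp_mem (W : MorphismProperty SSet) (hW : WeaklySaturated W)
    {X Y Z : SSet} (f : X ⟶ Y) (g : Y ⟶ Z) (hf : W f) (hg : W g) : W (f ≫ g) := by
  have hT : IsTerminal (2 : Fin 3) :=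
    IsTerminal.ofUniqueHom (fun j => homOfLE (Fin.le_last j)) (fun _ _ => Subsingleton.elim _ _)
  have hc : IsColimit (coconeOfDiagramTerminal hT (ComposableArrows.mk₂ f g)) :=
    colimitOfDiagramTerminal hT _
  have i1 : WellFoundedLT (Fin 3) := inferInstance
  have hsc := hW.2.2
  have key := @hsc (Fin 3) _ _ _ i1 (ComposableArrows.mk₂ f g)
    (coconeOfDiagramTerminal hT (ComposableArrows.mk₂ f g)) hc ?_ ?_
  · have e1 : (coconeOfDiagramTerminal hT (ComposableArrows.mk₂ f g)).ι.app ⊥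
        = (ComposableArrows.mk₂ f g).map' 0 2 := by
      apply congrArg
      exact Subsingleton.elim _ _
    rw [e1, (ComposableArrows.mk₂ f g).map'_comp 0 1 2] at key
    have e2 : (ComposableArrows.mk₂ f g).map' 0 1 = f := rfl
    have e3 : (ComposableArrows.mk₂ f g).map' 1 2 = g := rfl
    rwa [e2, e3] at key
  · intro j hj
    fin_cases j
    · exact hf
    · exact hg
    · exact absurd (fun b _ => Fin.le_last b) hj
  · intro j hj
    exfalso
    obtain ⟨hmin, hpre⟩ := hj
    fin_cases j
    · exact hmin (fun b _ => b.zero_le)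
    · refine hpre 0 ⟨by decide, fun c h1 h2 => ?_⟩
      fin_cases c
      · exact absurd h1 (by decide)
      · exact absurd h2 (by decide)
      · exact absurd h2 (by decide)
    · refine hpre 1 ⟨by decide, fun c h1 h2 => ?_⟩
      fin_cases c
      · exact absurd h1 (by decide)
      · exact absurd h1 (by decide)
      · exact absurd h2 (by decide)

open Classical in
/-- A concrete criterion for a commutative square of types to be a pushout. -/
lemma typesIsPushout {Z X Y P : Type u} (f : Z ⟶ X) (g : Z ⟶ Y) (h : X ⟶ P) (i : Y ⟶ P)
    (w : f ≫ h = g ≫ i) (hh : Function.Injective h) (hi : Function.Injective i)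
    (surj : ∀ p : P, (∃ x, h x = p) ∨ (∃ y, i y = p))
    (inter : ∀ x y, h x = i y → ∃ z, f z = x ∧ g z = y) :
    IsPushout f g h i := by
  let desc : ∀ s : PushoutCocone f g, P ⟶ s.pt := fun s => TypeCat.ofHom fun p =>
    if hp : ∃ x, h x = p then s.inl hp.choose
    else s.inr ((surj p).resolve_left hp).choose
  have hdesc_inl : ∀ (s : PushoutCocone f g) (x : X), desc s (h x) = s.inl x := by
    intro s x
    have hp : ∃ x', h x' = h x := ⟨x, rfl⟩
    change dite _ _ _ = _; rw [dif_pos hp]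
    rw [hh hp.choose_spec]
  have hdesc_inr : ∀ (s : PushoutCocone f g) (y : Y), desc s (i y) = s.inr y := by
    intro s y
    by_cases hp : ∃ x, h x = i y
    · obtain ⟨z, hz1, hz2⟩ := inter hp.choose y hp.choose_spec
      change dite _ _ _ = _; rw [dif_pos hp]
      calc s.inl hp.choose = s.inl (f z) := by rw [hz1]
        _ = s.inr (g z) := ConcreteCategory.congr_hom s.condition z
        _ = s.inr y := by rw [hz2]
    · change dite _ _ _ = _; rw [dif_neg hp]
      rw [hi ((surj (i y)).resolve_left hp).choose_spec]
  apply IsPushout.of_isColimit (c := PushoutCocone.mk h i w)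
  refine PushoutCocone.IsColimit.mk w desc
    (fun s => ConcreteCategory.hom_ext _ _ fun x => hdesc_inl s x)
    (fun s => ConcreteCategory.hom_ext _ _ fun y => hdesc_inr s y) ?_
  intro s m hl hr
  apply ConcreteCategory.hom_ext; intro p
  rcases surj p with ⟨x, rfl⟩ | ⟨y, rfl⟩
  · rw [hdesc_inl s x, ← hl]; rfl
  · rw [hdesc_inr s y, ← hr]; rfl

/-- A pointwise pushout of simplicial sets is a pushout. -/
lemma ssetIsPushout {Z X Y P : SSet} (f : Z ⟶ X) (g : Z ⟶ Y) (h : X ⟶ P) (i : Y ⟶ P)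
    (w : f ≫ h = g ≫ i)
    (hpt : ∀ m : SimplexCategoryᵒᵖ, IsPushout (f.app m) (g.app m) (h.app m) (i.app m)) :
    IsPushout f g h i := by
  apply IsPushout.of_isColimit (c := PushoutCocone.mk h i w)
  apply evaluationJointlyReflectsColimits
  intro m
  exact (isColimitMapCoconePushoutCoconeEquiv ((evaluation _ _).obj m) w).symm (hpt m).isColimit

/-- The restriction of generalized horns along an inclusion `A' ⊆ A`. -/
def genHornRestrict {n : ℕ} {A A' : Set (Fin (n + 1))} (hsub : A' ⊆ A) :
    genHorn n A ⟶ genHorn n A' where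
  app o := TypeCat.ofHom fun α => ⟨α.1, α.2.imp fun j hj => ⟨fun hjA' => hj.1 (hsub hjA'), hj.2⟩⟩
  naturality _ _ u := by apply ConcreteCategory.hom_ext; intro α; exact Subtype.ext rfl

/-- The face `Δ[n] → Λ^A[n+1]` through `δ k`, for `k ∉ A`. -/
def faceToHorn {n : ℕ} (k : Fin (n + 2)) (A : Set (Fin (n + 2))) (hk : k ∉ A) :
    Δ[n] ⟶ genHorn (n + 1) A where
  app o := TypeCat.ofHom fun α => ⟨(SSet.stdSimplex.map (δ k)).app o α, k, hk, by
    rintro ⟨x, hx⟩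
    exact k.succAbove_ne (stdSimplex.asOrderHom α x) hx⟩
  naturality _ _ u := by
    apply ConcreteCategory.hom_ext; intro α
    have := ConcreteCategory.congr_hom ((SSet.stdSimplex.map (δ k)).naturality u) α
    exact Subtype.ext this

/-- The map `Λ^B[n] → Λ^A[n+1]` through `δ k`, where `B = succAbove k ⁻¹' (A \ {k})`. -/
def hornFace {n : ℕ} (k : Fin (n + 2)) (A : Set (Fin (n + 2))) :
    genHorn n (k.succAbove ⁻¹' (A \ {k})) ⟶ genHorn (n + 1) A where
  app o := TypeCat.ofHom fun β => ⟨(SSet.stdSimplex.map (δ k)).app o β.1, by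
    obtain ⟨i, hiB, hi⟩ := β.2
    refine ⟨k.succAbove i, ?_, ?_⟩
    · intro hmem
      exact hiB (Set.mem_preimage.mpr ⟨hmem, k.succAbove_ne i⟩)
    · rintro ⟨x, hx⟩
      exact hi ⟨x, Fin.succAbove_right_injective hx⟩⟩
  naturality _ _ u := by
    apply ConcreteCategory.hom_ext; intro β
    have := ConcreteCategory.congr_hom ((SSet.stdSimplex.map (δ k)).naturality u) β.1
    exact Subtype.ext this

/-- The key pushout square: `Λ^A[n+1] → Λ^{A \ {k}}[n+1]` is a pushout of
`Λ^B[n] → Δ[n]` along `Λ^B[n] → Λ^A[n+1]`, where `B = succAbove k ⁻¹' (A \ {k})`. -/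
lemma hornPushout {n : ℕ} (k : Fin (n + 2)) (A : Set (Fin (n + 2))) (hkA : k ∈ A) :
    IsPushout (hornFace k A) (genHornInclusion n (k.succAbove ⁻¹' (A \ {k})))
      (genHornRestrict Set.diff_subset)
      (faceToHorn k (A \ {k}) (fun h => h.2 rfl)) := by
  apply ssetIsPushout
  · apply SSet.hom_ext
    intro o
    apply ConcreteCategory.hom_ext; intro β
    exact Subtype.ext rfl
  · intro o
    apply typesIsPushout
    · apply ConcreteCategory.hom_ext; intro β; exact Subtype.ext rfl
    · intro a b hab
      have hab' := congrArg Subtype.val hab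
      exact Subtype.ext hab'
    · intro a b hab
      have hab' := congrArg Subtype.val hab
      apply stdSimplex.objEquiv.injective
      apply SimplexCategory.Hom.ext'
      apply OrderHom.ext
      funext x
      have := congrArg (fun z => stdSimplex.asOrderHom z x) hab'
      exact Fin.succAbove_right_injective (p := k) (by exact this)
    · -- joint surjectivity
      rintro ⟨α, j, hjA', hjr⟩
      by_cases hjk : j = k
      · right
        subst hjk
        have hk : ∀ x, stdSimplex.asOrderHom α x ≠ j := fun x hx => hjr ⟨x, hx⟩
        refine ⟨stdSimplex.objEquiv.symm
          (factor_δ (m := o.unop.len) (stdSimplex.objEquiv α) j), ?_⟩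
        apply Subtype.ext
        show (SSet.stdSimplex.map (δ j)).app o _ = α
        apply stdSimplex.objEquiv.injective
        exact factor_δ_spec (m := o.unop.len) (stdSimplex.objEquiv α) j hk
      · left
        have hjA : j ∉ A := fun hj => hjA' ⟨hj, hjk⟩
        exact ⟨⟨α, j, hjA, hjr⟩, Subtype.ext rfl⟩
    · -- intersection
      rintro ⟨α, j, hjA, hjr⟩ y hxy
      have hα : α = (SSet.stdSimplex.map (δ k)).app o y := congrArg Subtype.val hxy
      have hjk : j ≠ k := fun h => hjA (h ▸ hkA)
      obtain ⟨i, hi⟩ := Fin.exists_succAbove_eq hjk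
      have hiB : i ∉ k.succAbove ⁻¹' (A \ {k}) := by
        intro hmem
        exact hjA (hi ▸ hmem.1)
      have hir : i ∉ Set.range (stdSimplex.asOrderHom y) := by
        rintro ⟨x, hx⟩
        apply hjr
        refine ⟨x, ?_⟩
        rw [hα]
        show k.succAbove (stdSimplex.asOrderHom y x) = j
        rw [hx, hi]
      refine ⟨⟨y, i, hiB, hir⟩, Subtype.ext ?_, rfl⟩
      exact hα.symm

/-- The generalized horn at a singleton set maps to the usual horn. -/
def genToHorn (n : ℕ) (k : Fin (n + 1)) : genHorn n {k} ⟶ (Λ[n, k] : SSet) where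
  app o := TypeCat.ofHom fun α => ⟨α.1, by
    obtain ⟨j, hj, hjr⟩ := α.2
    intro h
    rcases Set.mem_union _ _ _ |>.mp (Set.eq_univ_iff_forall.mp h j) with h1 | h1
    · exact hjr h1
    · exact hj h1⟩
  naturality _ _ u := by apply ConcreteCategory.hom_ext; intro α; exact Subtype.ext rfl

/-- The usual horn maps to the generalized horn at a singleton set. -/
def hornToGen (n : ℕ) (k : Fin (n + 1)) : (Λ[n, k] : SSet) ⟶ genHorn n {k} where
  app o := TypeCat.ofHom fun α => ⟨α.1, by
    obtain ⟨j, hj⟩ := (Set.ne_univ_iff_exists_notMem _).mp α.2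
    exact ⟨j, fun h => hj (Or.inr h), fun h => hj (Or.inl h)⟩⟩
  naturality _ _ u := by apply ConcreteCategory.hom_ext; intro α; exact Subtype.ext rfl

lemma genHornSingletonRetract (n : ℕ) (k : Fin (n + 1)) :
    IsRetractOf (genHornInclusion n {k}) (horn n k).ι := by
  refine ⟨genToHorn n k, hornToGen n k, 𝟙 _, 𝟙 _, ?_, ?_, ?_, ?_⟩
  · apply SSet.hom_ext; intro o; apply ConcreteCategory.hom_ext; intro α; exact Subtype.ext rfl
  · apply SSet.hom_ext; intro o; apply ConcreteCategory.hom_ext; intro α; rfl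
  · apply SSet.hom_ext; intro o; apply ConcreteCategory.hom_ext; intro α; rfl
  · apply SSet.hom_ext; intro o; apply ConcreteCategory.hom_ext; intro α; rfl

lemma genHornRestrict_comp_inclusion {n : ℕ} {A A' : Set (Fin (n + 1))} (hsub : A' ⊆ A) :
    genHornRestrict hsub ≫ genHornInclusion n A' = genHornInclusion n A := by
  apply SSet.hom_ext; intro o; apply ConcreteCategory.hom_ext; intro α; rfl

/-- Bounds for the reindexed horn set. -/
lemma succAbove_preimage_bounds {m : ℕ} (k : Fin (m + 2)) (A : Set (Fin (m + 2)))
    (hkA : k ∈ A) (hA' : ∀ i ∈ A, 0 < (i : ℕ) ∧ (i : ℕ) < m + 1) :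
    ∀ i ∈ k.succAbove ⁻¹' (A \ {k}), 0 < (i : ℕ) ∧ (i : ℕ) < m := by
  intro i hi
  obtain ⟨hmem, hne⟩ := hi
  have hKb := hA' k hkA
  have hb := hA' _ hmem
  by_cases h : i.castSucc < k
  · rw [Fin.succAbove_of_castSucc_lt _ _ h] at hb
    rw [Fin.lt_def] at h
    simp only [Fin.coe_castSucc] at hb h
    omega
  · rw [Fin.succAbove_of_le_castSucc _ _ (not_lt.mp h)] at hb
    rw [not_lt, Fin.le_def] at h
    simp only [Fin.val_succ, Fin.coe_castSucc] at hb h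
    omega

theorem genHorn_innerAnodyne_aux : ∀ (N n : ℕ) (A : Set (Fin (n + 1))),
    n + A.ncard ≤ N → A.Nonempty → (∀ i ∈ A, 0 < (i : ℕ) ∧ (i : ℕ) < n) →
    InnerAnodyne (genHornInclusion n A) := by
  intro N
  induction N using Nat.strong_induction_on with
  | _ N IH =>
    intro n A hle hA hA' W hW hC
    obtain ⟨k, hkA⟩ := hA
    by_cases hsing : A = {k}
    · subst hsing
      have hk := hA' k rfl
      exact hW.2.1 _ _ (genHornSingletonRetract n k) (hC n k hk.1 hk.2)
    · -- A has at least two elements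
      have hj : ∃ j ∈ A, j ≠ k := by
        by_contra hcon
        push_neg at hcon
        apply hsing
        apply Set.eq_singleton_iff_unique_mem.mpr ⟨hkA, fun j hj => hcon j hj⟩
      obtain ⟨j, hjA, hjk⟩ := hj
      have hn1 : 0 < n := (hA' k hkA).2.trans_le' (Nat.zero_le _) |>.trans_le (le_refl n) |>.trans_le (le_refl n)
      obtain ⟨m, rfl⟩ : ∃ m, n = m + 1 := ⟨n - 1, by omega⟩
      set B := k.succAbove ⁻¹' (A \ {k}) with hB
      -- B is nonempty
      obtain ⟨i₀, hi₀⟩ := Fin.exists_succAbove_eq hjk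
      have hBne : B.Nonempty := ⟨i₀, by
        rw [hB, Set.mem_preimage, hi₀]; exact ⟨hjA, hjk⟩⟩
      -- cardinalities
      have hBcard : B.ncard ≤ A.ncard := by
        have h1 : B.ncard = (k.succAbove '' B).ncard :=
          (Set.ncard_image_of_injective _ (Fin.succAbove_right_injective)).symm
        have h2 : k.succAbove '' B ⊆ A := by
          rintro x ⟨y, hy, rfl⟩
          exact hy.1
        rw [h1]
        exact Set.ncard_le_ncard h2 A.toFinite
      have hAcard : (A \ {k}).ncard < A.ncard :=
        Set.ncard_diff_singleton_lt_of_mem hkA A.toFinite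
      -- inner anodyne of the two pieces
      have hWB : W (genHornInclusion m B) := by
        refine IH (m + B.ncard) (by omega) m B le_rfl hBne
          (succAbove_preimage_bounds k A hkA hA') W hW hC
      have hWrestrict : W (genHornRestrict (Set.diff_subset : A \ {k} ⊆ A)) :=
        hW.1 _ (hornFace k A) _ _ (hornPushout k A hkA) hWB
      have hWA' : W (genHornInclusion (m + 1) (A \ {k})) := by
        refine IH ((m + 1) + (A \ {k}).ncard) (by omega) (m + 1) (A \ {k}) le_rfl
          ⟨j, hjA, hjk⟩ (fun i hi => hA' i hi.1) W hW hC
      rw [← genHornRestrict_comp_inclusion (Set.diff_subset : A \ {k} ⊆ A)]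
      exact hW.comp_mem W _ _ hWrestrict hWA'

end Auxiliary

/-- For `n ≥ 2` and any nonempty `A ⊆ {1,…,n-1}`, the generalized inner horn
inclusion `Λ^A[n] → Δ^n` is inner anodyne.  (For `A = {1,…,n-1}` this is the
inclusion `∂_0Δ^n ∪ ∂_nΔ^n → Δ^n` of the union of the two outer faces.) -/
theorem statement12 (n : ℕ) (hn : 2 ≤ n) (A : Set (Fin (n + 1)))
    (hA : A.Nonempty) (hA' : ∀ i ∈ A, 0 < (i : ℕ) ∧ (i : ℕ) < n) :
    InnerAnodyne (genHornInclusion n A) :=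
  genHorn_innerAnodyne_aux (n + A.ncard) n A le_rfl hA hA'
end

section
/- Every surjective partial map between finite sets, i.e. every morphism of the category F_o, can be written as a finite composition of morphisms of the following three types: (1) the inert map î : ⟨n⟩ → ⟨n−1⟩ undefined exactly at i and order-preserving elsewhere; (2) bijections ⟨n⟩ → ⟨n⟩; (3) the active map μ_{k,l} : ⟨k+l⟩ → ⟨1+l⟩ sending 1,…,k all to 1 and k+j to 1+j for 1 ≤ j ≤ l. -/
open CategoryTheory

/-- The inert map `î : ⟨n+1⟩ → ⟨n⟩` which is undefined exactly at `i` and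
order-preserving elsewhere. -/
def FCat.hatMap (n : ℕ) (i : Fin (n + 1)) : ((n + 1 : ℕ) : FCat) ⟶ (n : FCat) :=
  fun k =>
    if h : (k : ℕ) < (i : ℕ) then
      some ⟨(k : ℕ), by have hk := k.isLt; have hi := i.isLt; omega⟩
    else if h' : (k : ℕ) = (i : ℕ) then none
    else some ⟨(k : ℕ) - 1, by have hk := k.isLt; omega⟩

/-- The bijection `⟨n⟩ → ⟨n⟩` induced by a permutation. -/
def FCat.permMap (n : ℕ) (e : Equiv.Perm (Fin n)) : (n : FCat) ⟶ (n : FCat) :=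
  fun k => some (e k)

/-- The active map `μ_{k,l} : ⟨k+l⟩ → ⟨1+l⟩` sending `1,…,k` all to `1` and
`k+j` to `1+j` for `1 ≤ j ≤ l`. -/
def FCat.muMap (k l : ℕ) : ((k + l : ℕ) : FCat) ⟶ ((1 + l : ℕ) : FCat) :=
  fun j =>
    if h : (j : ℕ) < k then some ⟨0, by omega⟩
    else some ⟨(j : ℕ) - k + 1, by have hj := j.isLt; omega⟩

/-- The class of morphisms of `F` which are finite composites of morphisms of
the three types: (1) the inert maps `î`, (2) bijections, (3) the active maps
`μ_{k,l}`. -/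
inductive FCat.Gen : ∀ {m n : FCat}, (m ⟶ n) → Prop
  | hat (n : ℕ) (i : Fin (n + 1)) : FCat.Gen (FCat.hatMap n i)
  | perm (n : ℕ) (e : Equiv.Perm (Fin n)) : FCat.Gen (FCat.permMap n e)
  | mu (k l : ℕ) : FCat.Gen (FCat.muMap k l)
  | comp {m n p : FCat} (f : m ⟶ n) (g : n ⟶ p) :
      FCat.Gen f → FCat.Gen g → FCat.Gen (f ≫ g)

lemma FCat.exists_perm_two {n : ℕ} {a b x y : Fin n} (hab : a ≠ b) (hxy : x ≠ y) :
    ∃ e : Equiv.Perm (Fin n), e a = x ∧ e b = y := by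
  have haj : a ≠ Equiv.swap a x y := by
    intro h
    apply hxy
    have h2 := congrArg (Equiv.swap a x) h
    rw [Equiv.swap_apply_left, Equiv.swap_apply_self] at h2
    exact h2
  refine ⟨(Equiv.swap b (Equiv.swap a x y)).trans (Equiv.swap a x), ?_, ?_⟩
  · show Equiv.swap a x (Equiv.swap b (Equiv.swap a x y) a) = x
    rw [Equiv.swap_apply_of_ne_of_ne hab haj, Equiv.swap_apply_left]
  · show Equiv.swap a x (Equiv.swap b (Equiv.swap a x y) b) = y
    rw [Equiv.swap_apply_left, Equiv.swap_apply_self]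

lemma FCat.gen_aux : ∀ m : ℕ, ∀ (n : FCat) (f : (m : FCat) ⟶ n),
    (∀ j : Fin n, ∃ i : Fin m, FCat.app f i = some j) → FCat.Gen f := by
  intro m
  induction m using Nat.strong_induction_on with
  | _ m IH =>
    intro n f hf
    by_cases htot : ∀ i : Fin m, f i ≠ none
    · -- f is total
      have hsome : ∀ i : Fin m, ∃ j, f i = some j := by
        intro i
        cases h : f i with
        | none => exact absurd h (htot i)
        | some j => exact ⟨j, rfl⟩
      choose f₀ hf₀ using hsome
      by_cases hinj : Function.Injective f₀
      · -- bijection case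
        have hsurj : Function.Surjective f₀ := by
          intro j
          obtain ⟨i, hi⟩ := hf j
          refine ⟨i, ?_⟩
          have : some (f₀ i) = some j := (hf₀ i).symm.trans hi
          exact Option.some_injective _ this
        have hbij : Function.Bijective f₀ := ⟨hinj, hsurj⟩
        have hmn : m = n := by
          have := Fintype.card_of_bijective hbij
          simpa using this
        subst hmn
        have hfe : f = FCat.permMap m (Equiv.ofBijective f₀ hbij) := by
          funext i
          show f i = some (Equiv.ofBijective f₀ hbij i)
          simpa [Equiv.ofBijective] using hf₀ i
        rw [hfe]
        exact FCat.Gen.perm _ _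
      · -- two points map to the same value
        obtain ⟨i, i', hii, hne⟩ := Function.not_injective_iff.mp hinj
        have hm2 : 2 ≤ m := by
          have h1 := i.isLt
          have h2 := i'.isLt
          have h3 : (i : ℕ) ≠ (i' : ℕ) := fun h => hne (Fin.ext h)
          omega
        obtain ⟨l, rfl⟩ : ∃ l, m = 2 + l := ⟨m - 2, by omega⟩
        have hz01 : (⟨0, by omega⟩ : Fin (2 + l)) ≠ ⟨1, by omega⟩ := by
          intro h
          exact absurd (congrArg Fin.val h) (by simp)
        obtain ⟨e, he0, he1⟩ := FCat.exists_perm_two hz01 hne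
        have hfii : f i = f i' := by rw [hf₀ i, hf₀ i', hii]
        obtain ⟨g, hgdef⟩ : ∃ g : ((1 + l : ℕ) : FCat) ⟶ n, g = fun (jv : Fin (1 + l)) =>
            if (jv : ℕ) = 0 then f (e ⟨0, by omega⟩)
            else f (e ⟨(jv : ℕ) + 1, by have := jv.isLt; omega⟩) := ⟨_, rfl⟩
        have hg0 : ∀ (h : 0 < 1 + l), g ⟨0, h⟩ = f (e ⟨0, by omega⟩) := by
          intro h
          rw [hgdef]
          rfl
        have hg1 : ∀ (x : ℕ) (h1 : x < 1 + l), x ≠ 0 →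
            g ⟨x, h1⟩ = f (e ⟨x + 1, by omega⟩) := by
          intro x h1 hx
          rw [hgdef]
          show (if x = 0 then f (e ⟨0, by omega⟩) else f (e ⟨x + 1, by omega⟩))
            = f (e ⟨x + 1, by omega⟩)
          rw [if_neg hx]
        have hFg : ∀ k' : Fin (2 + l), (FCat.muMap 2 l k').bind g = f (e k') := by
          intro k'
          unfold FCat.muMap
          by_cases hk : (k' : ℕ) < 2
          · rw [dif_pos hk]
            show g ⟨0, by omega⟩ = f (e k')
            rw [hg0]
            have hcase : k' = (⟨0, by omega⟩ : Fin (2 + l)) ∨ k' = ⟨1, by omega⟩ := by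
              have h01 : (k' : ℕ) = 0 ∨ (k' : ℕ) = 1 := by omega
              rcases h01 with h | h
              · exact Or.inl (Fin.ext h)
              · exact Or.inr (Fin.ext h)
            rcases hcase with h | h
            · rw [h]
            · rw [h, he1, he0]
              exact hfii
          · rw [dif_neg hk]
            show g ⟨(k' : ℕ) - 2 + 1, by have := k'.isLt; omega⟩ = f (e k')
            rw [hg1 _ _ (by omega)]
            have hkk : (⟨(k' : ℕ) - 2 + 1 + 1, by have := k'.isLt; omega⟩ : Fin (2 + l)) = k' :=
              Fin.ext (by show (k' : ℕ) - 2 + 1 + 1 = (k' : ℕ); omega)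
            rw [hkk]
        have key : f = FCat.permMap (2 + l) e.symm ≫ (FCat.muMap 2 l ≫ g) := by
          funext k
          show f k = ((FCat.muMap 2 l) (e.symm k)).bind g
          rw [hFg (e.symm k), Equiv.apply_symm_apply]
        rw [key]
        refine FCat.Gen.comp _ _ (FCat.Gen.perm _ _) (FCat.Gen.comp _ _ (FCat.Gen.mu 2 l) ?_)
        apply IH (1 + l) (by omega)
        intro t
        obtain ⟨i0, hi0⟩ := hf t
        have h1 : (FCat.muMap 2 l (e.symm i0)).bind g = f i0 := by
          rw [hFg (e.symm i0), Equiv.apply_symm_apply]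
        have h2 : ∃ jv, FCat.muMap 2 l (e.symm i0) = some jv := by
          unfold FCat.muMap
          split
          · exact ⟨_, rfl⟩
          · exact ⟨_, rfl⟩
        obtain ⟨jv, hjv⟩ := h2
        rw [hjv] at h1
        exact ⟨jv, h1.trans hi0⟩
    · -- f is undefined somewhere
      rw [not_forall] at htot
      obtain ⟨i, hi⟩ := htot
      rw [not_not] at hi
      have hm1 : 1 ≤ m := i.pos
      obtain ⟨m', rfl⟩ : ∃ m', m = m' + 1 := ⟨m - 1, by omega⟩
      set s : Fin m' → Fin (m' + 1) := fun jv =>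
        if (jv : ℕ) < (i : ℕ) then ⟨(jv : ℕ), by have := jv.isLt; omega⟩
        else ⟨(jv : ℕ) + 1, by have := jv.isLt; omega⟩ with hsdef
      set g : ((m' : ℕ) : FCat) ⟶ n := fun jv => f (s jv) with hgdef
      have key : f = FCat.hatMap m' i ≫ g := by
        funext k
        show f k = (FCat.hatMap m' i k).bind g
        unfold FCat.hatMap
        by_cases h1 : (k : ℕ) < (i : ℕ)
        · rw [dif_pos h1]
          show f k = g ⟨(k : ℕ), by have := k.isLt; have := i.isLt; omega⟩
          rw [hgdef]
          congr 1
          rw [hsdef]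
          simp only [if_pos h1]
        · rw [dif_neg h1]
          by_cases h2 : (k : ℕ) = (i : ℕ)
          · rw [dif_pos h2]
            have : k = i := Fin.ext h2
            rw [this, hi]
            rfl
          · rw [dif_neg h2]
            show f k = g ⟨(k : ℕ) - 1, by have := k.isLt; omega⟩
            rw [hgdef]
            congr 1
            rw [hsdef]
            have hnl : ¬ ((k : ℕ) - 1 < (i : ℕ)) := by omega
            simp only [if_neg hnl]
            apply Fin.ext
            show (k : ℕ) = (k : ℕ) - 1 + 1
            omega
      rw [key]
      refine FCat.Gen.comp _ _ (FCat.Gen.hat m' i) ?_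
      apply IH m' (by omega)
      intro t
      obtain ⟨i0, hi0⟩ := hf t
      have hne : (i0 : ℕ) ≠ (i : ℕ) := by
        intro h
        have h4 : i0 = i := Fin.ext h
        unfold FCat.app at hi0
        rw [h4, hi] at hi0
        exact Option.some_ne_none t hi0.symm
      have : ∃ jv : Fin m', s jv = i0 := by
        by_cases hlt : (i0 : ℕ) < (i : ℕ)
        · have hi' := i.isLt
          refine ⟨⟨(i0 : ℕ), by omega⟩, ?_⟩
          rw [hsdef]
          simp only [if_pos hlt]
        · have hgt : (i : ℕ) < (i0 : ℕ) := by omega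
          have hi0' := i0.isLt
          refine ⟨⟨(i0 : ℕ) - 1, by omega⟩, ?_⟩
          rw [hsdef]
          have hnl : ¬ ((i0 : ℕ) - 1 < (i : ℕ)) := by omega
          simp only [if_neg hnl]
          apply Fin.ext
          show (i0 : ℕ) - 1 + 1 = (i0 : ℕ)
          omega
      obtain ⟨jv, hjv⟩ := this
      refine ⟨jv, ?_⟩
      show g jv = some t
      rw [hgdef]
      simp only [hjv]
      exact hi0

/-- Every surjective partial map between finite sets (morphism of `F_o`) is a
finite composite of inert maps `î`, bijections, and active maps `μ_{k,l}`. -/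
theorem statement17 (m n : FCat) (f : m ⟶ n)
    (hf : ∀ j : Fin n, ∃ i : Fin m, FCat.app f i = some j) :
    FCat.Gen f := by
  exact FCat.gen_aux m n f hf
end
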